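/- For any integers ℓ_1, …, ℓ_n with ℓ_i ≥ m, the denominators satisfy Q_{n−1} ≤ θ·Q_n; moreover, for any digit d ≥ m, the gap between the adjacent subcylinders I_{n+1}(ℓ_1,…,ℓ_n,d) and I_{n+1}(ℓ_1,…,ℓ_n,d+1) equals Δ_d = θ/((Q_n·d·θ + Q_{n−1})·(Q_n·(d+1)·θ + Q_{n−1})) and satisfies Δ_d ≥ 1/(θ·Q_n²·(d+1)·(d+2)). -/

import Mathlib

open Filter Real

noncomputable section

/-- The denominators `Q_k` of the θ-expansion convergents, given a (1-indexed) digit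
sequence `ℓ` : `Q_0 = 1`, `Q_1 = ℓ_1·θ` (from `Q_{-1} = 0`), and
`Q_k = ℓ_k·θ·Q_{k-1} + Q_{k-2}`. -/
def Qden (θ : ℝ) (ℓ : ℕ → ℤ) : ℕ → ℝ
  | 0 => 1
  | 1 => (ℓ 1 : ℝ) * θ
  | (n + 2) => (ℓ (n + 2) : ℝ) * θ * Qden θ ℓ (n + 1) + Qden θ ℓ n

/-- The numerators `P_k` of the θ-expansion convergents:
`P_0 = 0`, `P_1 = 1` (from `P_{-1} = 1`), `P_k = ℓ_k·θ·P_{k-1} + P_{k-2}`. -/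
def Pnum (θ : ℝ) (ℓ : ℕ → ℤ) : ℕ → ℝ
  | 0 => 0
  | 1 => 1
  | (n + 2) => (ℓ (n + 2) : ℝ) * θ * Pnum θ ℓ (n + 1) + Pnum θ ℓ n

/-- The endpoint `(P_n·d·θ + P_{n−1}) / (Q_n·d·θ + Q_{n−1})` of the subcylinder
`I_{n+1}(ℓ_1,…,ℓ_n,d)`. -/
def cylEndpoint (θ : ℝ) (ℓ : ℕ → ℤ) (n : ℕ) (d : ℤ) : ℝ :=
  (Pnum θ ℓ n * (d : ℝ) * θ + Pnum θ ℓ (n - 1)) /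
    (Qden θ ℓ n * (d : ℝ) * θ + Qden θ ℓ (n - 1))

lemma Qden_pos (θ : ℝ) (hθ : 0 < θ) (ℓ : ℕ → ℤ) (n : ℕ)
    (hℓ : ∀ i, 1 ≤ i → i ≤ n → (1:ℝ) ≤ (ℓ i : ℝ)) :
    ∀ k, k ≤ n → 0 < Qden θ ℓ k := by
  intro k
  induction k using Nat.strong_induction_on with
  | _ k ih =>
    match k with
    | 0 => intro _; simp [Qden]
    | 1 =>
      intro h1
      have := hℓ 1 le_rfl h1
      simp only [Qden]
      nlinarith
    | (j+2) =>
      intro h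
      have h1 := ih (j+1) (by omega) (by omega)
      have h0 := ih j (by omega) (by omega)
      have hl := hℓ (j+2) (by omega) h
      simp only [Qden]
      have hp := mul_pos (mul_pos (show (0:ℝ) < (ℓ (j+2) : ℝ) by linarith) hθ) h1
      linarith

lemma Qden_ratio (θ : ℝ) (hθ : 0 < θ) (ℓ : ℕ → ℤ) (n : ℕ)
    (hℓ : ∀ i, 1 ≤ i → i ≤ n → (1:ℝ) ≤ (ℓ i : ℝ))
    (hℓθ : ∀ i, 1 ≤ i → i ≤ n → (1:ℝ) ≤ (ℓ i : ℝ) * θ^2) :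
    ∀ k, 1 ≤ k → k ≤ n → Qden θ ℓ (k-1) ≤ θ * Qden θ ℓ k := by
  intro k
  match k with
  | 0 => intro h; omega
  | 1 =>
    intro _ h1
    have := hℓθ 1 le_rfl h1
    simp only [Nat.sub_self, Qden]
    nlinarith
  | (j+2) =>
    intro _ h
    have h1 := Qden_pos θ hθ ℓ n hℓ (j+1) (by omega)
    have h0 := Qden_pos θ hθ ℓ n hℓ j (by omega)
    have hl := hℓθ (j+2) (by omega) h
    show Qden θ ℓ (j+1) ≤ θ * Qden θ ℓ (j+2)
    simp only [Qden]
    have hp1 := mul_pos hθ h0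
    have hp2 := mul_le_mul_of_nonneg_right hl h1.le
    nlinarith

lemma det_id (θ : ℝ) (ℓ : ℕ → ℤ) :
    ∀ k, Pnum θ ℓ (k+1) * Qden θ ℓ k - Pnum θ ℓ k * Qden θ ℓ (k+1) = (-1)^k := by
  intro k
  induction k with
  | zero => simp [Pnum, Qden]
  | succ j ih =>
    show Pnum θ ℓ (j+2) * Qden θ ℓ (j+1) - Pnum θ ℓ (j+1) * Qden θ ℓ (j+2) = (-1)^(j+1)
    simp only [Pnum, Qden]
    linear_combination (-1 : ℝ) * ih

/-- `Q_{n−1} ≤ θ·Q_n`; moreover the gap `Δ_d` between the adjacent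
subcylinders for digits `d` and `d+1` equals
`θ/((Q_n·d·θ + Q_{n−1})·(Q_n·(d+1)·θ + Q_{n−1}))` and satisfies
`Δ_d ≥ 1/(θ·Q_n²·(d+1)·(d+2))`. -/
theorem cylinder_gap_bounds (θ : ℝ) (m : ℕ) (hm : 0 < m) (hmns : ¬ IsSquare m)
    (hθ : θ ∈ Set.Ioo (0 : ℝ) 1) (hθirr : Irrational θ) (hθ2 : θ ^ 2 = 1 / m)
    (n : ℕ) (hn : 1 ≤ n) (ℓ : ℕ → ℤ) (hℓ : ∀ i : ℕ, 1 ≤ i → i ≤ n → (m : ℤ) ≤ ℓ i)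
    (d : ℤ) (hd : (m : ℤ) ≤ d) :
    Qden θ ℓ (n - 1) ≤ θ * Qden θ ℓ n ∧
    |cylEndpoint θ ℓ n (d + 1) - cylEndpoint θ ℓ n d| =
      θ / ((Qden θ ℓ n * (d : ℝ) * θ + Qden θ ℓ (n - 1)) *
        (Qden θ ℓ n * ((d : ℝ) + 1) * θ + Qden θ ℓ (n - 1))) ∧
    1 / (θ * (Qden θ ℓ n) ^ 2 * ((d : ℝ) + 1) * ((d : ℝ) + 2)) ≤
      |cylEndpoint θ ℓ n (d + 1) - cylEndpoint θ ℓ n d| := by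
  obtain ⟨θpos, θlt1⟩ := hθ
  have hm1 : (1:ℝ) ≤ (m:ℝ) := by exact_mod_cast hm
  have hmθ : (m:ℝ) * θ^2 = 1 := by
    rw [hθ2]; field_simp
  have hℓ1 : ∀ i, 1 ≤ i → i ≤ n → (1:ℝ) ≤ (ℓ i : ℝ) := by
    intro i h1 h2
    have h := hℓ i h1 h2
    have h' : (m:ℝ) ≤ (ℓ i : ℝ) := by exact_mod_cast h
    linarith
  have hℓθ : ∀ i, 1 ≤ i → i ≤ n → (1:ℝ) ≤ (ℓ i : ℝ) * θ^2 := by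
    intro i h1 h2
    have h := hℓ i h1 h2
    have h' : (m:ℝ) ≤ (ℓ i : ℝ) := by exact_mod_cast h
    nlinarith
  obtain ⟨k, rfl⟩ : ∃ k, n = k + 1 := ⟨n - 1, by omega⟩
  simp only [Nat.add_sub_cancel]
  have hQn : 0 < Qden θ ℓ (k+1) := Qden_pos θ θpos ℓ (k+1) hℓ1 (k+1) le_rfl
  have hQk : 0 < Qden θ ℓ k := Qden_pos θ θpos ℓ (k+1) hℓ1 k (by omega)
  have hratio : Qden θ ℓ k ≤ θ * Qden θ ℓ (k+1) := by
    have := Qden_ratio θ θpos ℓ (k+1) hℓ1 hℓθ (k+1) (by omega) le_rfl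
    simpa using this
  have hd1 : (1:ℝ) ≤ (d:ℝ) := by
    have h' : (m:ℝ) ≤ (d:ℝ) := by exact_mod_cast hd
    linarith
  set Qn := Qden θ ℓ (k+1) with hQndef
  set Qk := Qden θ ℓ k with hQkdef
  set Pn := Pnum θ ℓ (k+1) with hPndef
  set Pk := Pnum θ ℓ k with hPkdef
  have hA : 0 < Qn * (d:ℝ) * θ + Qk := by nlinarith
  have hB : 0 < Qn * ((d:ℝ) + 1) * θ + Qk := by nlinarith
  have hdet : Pn * Qk - Pk * Qn = (-1)^k := det_id θ ℓ k
  have hkey : cylEndpoint θ ℓ (k+1) (d + 1) - cylEndpoint θ ℓ (k+1) d =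
      (-1)^k * θ / ((Qn * (d:ℝ) * θ + Qk) * (Qn * ((d:ℝ) + 1) * θ + Qk)) := by
    unfold cylEndpoint
    simp only [Nat.add_sub_cancel, ← hQndef, ← hQkdef, ← hPndef, ← hPkdef]
    push_cast
    rw [div_sub_div _ _ hB.ne' hA.ne', div_eq_div_iff (by positivity) (by positivity)]
    linear_combination (θ * ((Qn * (d:ℝ) * θ + Qk) * (Qn * ((d:ℝ)+1) * θ + Qk))) * hdet
  have habs : |cylEndpoint θ ℓ (k+1) (d + 1) - cylEndpoint θ ℓ (k+1) d| =
      θ / ((Qn * (d:ℝ) * θ + Qk) * (Qn * ((d:ℝ) + 1) * θ + Qk)) := by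
    rw [hkey, abs_div, abs_mul, abs_pow, abs_neg, abs_one, one_pow, one_mul,
      abs_of_pos θpos, abs_of_pos (mul_pos hA hB)]
  refine ⟨hratio, habs, ?_⟩
  rw [habs]
  have hAle : Qn * (d:ℝ) * θ + Qk ≤ θ * Qn * ((d:ℝ) + 1) := by nlinarith
  have hBle : Qn * ((d:ℝ) + 1) * θ + Qk ≤ θ * Qn * ((d:ℝ) + 2) := by nlinarith
  have h2 : θ / ((θ * Qn * ((d:ℝ) + 1)) * (θ * Qn * ((d:ℝ) + 2))) ≤
      θ / ((Qn * (d:ℝ) * θ + Qk) * (Qn * ((d:ℝ) + 1) * θ + Qk)) := by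
    apply div_le_div_of_nonneg_left θpos.le (mul_pos hA hB)
    exact mul_le_mul hAle hBle hB.le (by positivity)
  calc 1 / (θ * Qn ^ 2 * ((d:ℝ) + 1) * ((d:ℝ) + 2))
      = θ / ((θ * Qn * ((d:ℝ) + 1)) * (θ * Qn * ((d:ℝ) + 2))) := by
        rw [div_eq_div_iff (by positivity) (by positivity)]; ring
    _ ≤ _ := h2
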